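/- Assume β_k > 0 for all k ≥ 1, and that P_k(1) > 0 and P^{(m)}_k(1) > 0 for all k ≥ 0, where m ≥ 1. Let L_m := lim_{n→∞} P_n(1)/(P^{(m)}_{n−m}(1)·P_m(1)) and assume L_m > 0. If λ < 1/(1−L_m), then the sequence P*_n(1, λ, m)/P_n(1) converges as n → ∞ to λ + (1−λ)/L_m, which is strictly positive; moreover this sequence is monotonically nonincreasing when λ ≥ 1 and monotonically nondecreasing when λ ≤ 1. If λ = 1/(1−L_m), then lim_{n→∞} P*_n(1, λ, m)/P_n(1) = 0. -/

import Mathlib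

open Polynomial Filter

noncomputable section

/-- Monic polynomials `P_0 = 1`, `P_1 = X`, `P_{k+1} = X·P_k − β_k·P_{k−1}` (`k ≥ 1`). -/
def recP (β : ℕ → ℝ) : ℕ → Polynomial ℝ
  | 0 => 1
  | 1 => X
  | (k + 2) => X * recP β (k + 1) - C (β (k + 1)) * recP β k

/-- Co-dilated polynomials: same recurrence as `recP β`, except that at index `k = m`
the coefficient `β_m` is replaced by `λ·β_m`. -/
def recPstar (β : ℕ → ℝ) (lam : ℝ) (m : ℕ) : ℕ → Polynomial ℝ
  | 0 => 1
  | 1 => X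
  | (k + 2) => X * recPstar β lam m (k + 1) -
      C (if k + 1 = m then lam * β (k + 1) else β (k + 1)) * recPstar β lam m k

/-- The `m`-th numerator polynomials: `P^{(m)}_0 = 1`, `P^{(m)}_1 = X`,
`P^{(m)}_{k+1} = X·P^{(m)}_k − β_{k+m}·P^{(m)}_{k−1}` (`k ≥ 1`). -/
def recPnum (β : ℕ → ℝ) (m : ℕ) : ℕ → Polynomial ℝ
  | 0 => 1
  | 1 => X
  | (k + 2) => X * recPnum β m (k + 1) - C (β (k + 1 + m)) * recPnum β m k


/-- The sequence `a_n = P_n(1)/(P^{(m)}_{n−m}(1)·P_m(1))` (for `n ≥ m`). -/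
def aSeq (β : ℕ → ℝ) (m : ℕ) (n : ℕ) : ℝ :=
  (recP β n).eval 1 / ((recPnum β m (n - m)).eval 1 * (recP β m).eval 1)

/-- The normalized co-dilated sequence `P*_n(1, λ, m)/P_n(1)`. -/
def qSeq (β : ℕ → ℝ) (lam : ℝ) (m : ℕ) (n : ℕ) : ℝ :=
  (recPstar β lam m n).eval 1 / (recP β n).eval 1

lemma recP_step (β : ℕ → ℝ) {a c : ℕ} (h : a = c + 2) :
    (recP β a).eval 1 = (recP β (c+1)).eval 1 - β (c+1) * (recP β c).eval 1 := by
  subst h; simp [recP]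

lemma recPnum_step (β : ℕ → ℝ) (m : ℕ) {a c : ℕ} (h : a = c + 2) :
    (recPnum β m a).eval 1 = (recPnum β m (c+1)).eval 1 - β (c+1+m) * (recPnum β m c).eval 1 := by
  subst h; simp [recPnum]

lemma recPstar_step (β : ℕ → ℝ) (lam : ℝ) (m : ℕ) {a c : ℕ} (h : a = c + 2) (hne : c + 1 ≠ m) :
    (recPstar β lam m a).eval 1
      = (recPstar β lam m (c+1)).eval 1 - β (c+1) * (recPstar β lam m c).eval 1 := by
  subst h; simp [recPstar, if_neg hne]

lemma recPstar_eq_recP (β : ℕ → ℝ) (lam : ℝ) {m n : ℕ} (h : n ≤ m) :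
    recPstar β lam m n = recP β n := by
  induction n using Nat.strong_induction_on with
  | _ n ih =>
    match n, h with
    | 0, _ => rfl
    | 1, _ => rfl
    | (k+2), h =>
      rw [recPstar, recP, ih (k+1) (by omega) (by omega), ih k (by omega) (by omega),
        if_neg (by omega)]

lemma abstract_pid (γ : ℕ → ℝ) (u q r : ℕ → ℝ)
    (hu : ∀ j, u (j+2) = u (j+1) - γ (j+1) * u j)
    (hq0 : q 0 = 1) (hq1 : q 1 = 1)
    (hq : ∀ k, q (k+2) = q (k+1) - γ (k+2) * q k)
    (hr0 : r 0 = 1) (hr1 : r 1 = 1)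
    (hr : ∀ k, r (k+2) = r (k+1) - γ (k+3) * r k) :
    ∀ j, u (j+2) = u 1 * q (j+1) - γ 1 * u 0 * r j := by
  intro j
  induction j using Nat.twoStepInduction with
  | zero =>
      have h := hu 0; norm_num at h ⊢; rw [h, hq1, hr0]; ring
  | one =>
      have h1 := hu 1; have h0 := hu 0; have h2 := hq 0
      norm_num at h1 h0 h2 ⊢
      rw [h1, h0, h2, hq1, hq0, hr1]; ring
  | more k ih1 ih2 =>
      have e1 := hu (k+2); have e2 := hq (k+1); have e3 := hr k
      simp only [show k+2+2 = k+4 from by omega, show k+2+1 = k+3 from by omega,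
        show k+1+2 = k+3 from by omega, show k+1+1 = k+2 from by omega] at e1 e2 ih1 ih2 ⊢
      rw [e1, ih2, ih1, e2, e3]; ring

lemma abstract_star (γ : ℕ → ℝ) (lam : ℝ) (u s r : ℕ → ℝ)
    (hu : ∀ j, u (j+2) = u (j+1) - γ (j+1) * u j)
    (hs1 : s 1 = u 1) (hs0 : s 0 = u 0)
    (hs2 : s 2 = s 1 - lam * γ 1 * s 0)
    (hs : ∀ j, s (j+3) = s (j+2) - γ (j+2) * s (j+1))
    (hr0 : r 0 = 1) (hr1 : r 1 = 1)
    (hr : ∀ k, r (k+2) = r (k+1) - γ (k+3) * r k) :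
    ∀ j, s (j+2) = u (j+2) + (1 - lam) * γ 1 * u 0 * r j := by
  intro j
  induction j using Nat.twoStepInduction with
  | zero =>
      have h := hu 0; norm_num at h ⊢; rw [hs2, hs1, hs0, h, hr0]; ring
  | one =>
      have h1 := hu 1; have h0 := hu 0; have h2 := hs 0
      norm_num at h1 h0 h2 ⊢
      rw [h2, hs2, hs1, hs0, h1, h0, hr1]; ring
  | more k ih1 ih2 =>
      have e1 := hs (k+1); have e2 := hu (k+2); have e3 := hr k
      simp only [show k+1+3 = k+4 from by omega, show k+2+2 = k+4 from by omega,
        show k+2+1 = k+3 from by omega, show k+1+2 = k+3 from by omega,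
        show k+1+1 = k+2 from by omega] at e1 e2 ih1 ih2 ⊢
      rw [e1, ih2, ih1, e2, e3]; ring

lemma abstract_W (γ : ℕ → ℝ) (u r : ℕ → ℝ)
    (hu : ∀ j, u (j+2) = u (j+1) - γ (j+1) * u j)
    (hr0 : r 0 = 1) (hr1 : r 1 = 1)
    (hr : ∀ k, r (k+2) = r (k+1) - γ (k+3) * r k)
    (hγ : ∀ k, 0 < γ (k+1)) (hu1 : 0 < u 1) :
    ∀ j, 0 < r (j+1) * u (j+2) - r j * u (j+3) := by
  intro j
  induction j with
  | zero =>
      have h1 := hu 1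
      norm_num at h1 ⊢
      rw [hr0, hr1, h1]
      have := hγ 1
      nlinarith
  | succ k ih =>
      have e1 := hr k; have e2 := hu (k+2)
      simp only [show k+2+2 = k+4 from by omega, show k+2+1 = k+3 from by omega,
        show k+1+2 = k+3 from by omega, show k+1+1 = k+2 from by omega,
        show k+1+3 = k+4 from by omega] at e1 e2 ⊢
      have key : r (k+2) * u (k+3) - r (k+1) * u (k+4)
          = γ (k+3) * (r (k+1) * u (k+2) - r k * u (k+3)) := by rw [e1, e2]; ring
      rw [key]
      exact mul_pos (hγ (k+2)) ih

theorem codilated_asymptotics_at_one (β : ℕ → ℝ) (hβ : ∀ k, 1 ≤ k → 0 < β k)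
    (m : ℕ) (hm : 1 ≤ m)
    (hP : ∀ k : ℕ, 0 < (recP β k).eval 1) (hQ : ∀ k : ℕ, 0 < (recPnum β m k).eval 1)
    (L : ℝ) (hL : Tendsto (aSeq β m) atTop (nhds L)) (hL0 : 0 < L) (hL1 : L < 1)
    (lam : ℝ) :
    (lam < 1 / (1 - L) →
      Tendsto (qSeq β lam m) atTop (nhds (lam + (1 - lam) / L)) ∧
      0 < lam + (1 - lam) / L ∧
      (1 ≤ lam → ∀ n : ℕ, qSeq β lam m (n + 1) ≤ qSeq β lam m n) ∧
      (lam ≤ 1 → ∀ n : ℕ, qSeq β lam m n ≤ qSeq β lam m (n + 1))) ∧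
    (lam = 1 / (1 - L) → Tendsto (qSeq β lam m) atTop (nhds 0)) := by
  obtain ⟨m', rfl⟩ : ∃ m', m = m' + 1 := ⟨m - 1, by omega⟩
  clear hm
  -- bridge facts
  have hu : ∀ j, (recP β (m'+(j+2))).eval 1
      = (recP β (m'+(j+1))).eval 1 - β (m'+(j+1)) * (recP β (m'+j)).eval 1 := by
    intro j
    rw [recP_step β (show m'+(j+2) = (m'+j) + 2 from by omega),
      show m'+j+1 = m'+(j+1) from by omega]
  have hq0 : (recPnum β (m'+1) 0).eval 1 = 1 := by simp [recPnum]
  have hq1 : (recPnum β (m'+1) 1).eval 1 = 1 := by simp [recPnum]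
  have hqrec : ∀ k, (recPnum β (m'+1) (k+2)).eval 1
      = (recPnum β (m'+1) (k+1)).eval 1 - β (m'+(k+2)) * (recPnum β (m'+1) k).eval 1 := by
    intro k
    rw [recPnum_step β (m'+1) rfl, show k+1+(m'+1) = m'+(k+2) from by omega]
  have hr0 : (recPnum β (m'+2) 0).eval 1 = 1 := by simp [recPnum]
  have hr1 : (recPnum β (m'+2) 1).eval 1 = 1 := by simp [recPnum]
  have hrrec : ∀ k, (recPnum β (m'+2) (k+2)).eval 1
      = (recPnum β (m'+2) (k+1)).eval 1 - β (m'+(k+3)) * (recPnum β (m'+2) k).eval 1 := by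
    intro k
    rw [recPnum_step β (m'+2) rfl, show k+1+(m'+2) = m'+(k+3) from by omega]
  have hs0 : (recPstar β lam (m'+1) (m'+0)).eval 1 = (recP β (m'+0)).eval 1 := by
    rw [recPstar_eq_recP β lam (by omega)]
  have hs1 : (recPstar β lam (m'+1) (m'+1)).eval 1 = (recP β (m'+1)).eval 1 := by
    rw [recPstar_eq_recP β lam (by omega)]
  have hs2 : (recPstar β lam (m'+1) (m'+2)).eval 1
      = (recPstar β lam (m'+1) (m'+1)).eval 1
        - lam * β (m'+1) * (recPstar β lam (m'+1) (m'+0)).eval 1 := by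
    simp [recPstar]
  have hsrec : ∀ j, (recPstar β lam (m'+1) (m'+(j+3))).eval 1
      = (recPstar β lam (m'+1) (m'+(j+2))).eval 1
        - β (m'+(j+2)) * (recPstar β lam (m'+1) (m'+(j+1))).eval 1 := by
    intro j
    rw [recPstar_step β lam (m'+1) (show m'+(j+3) = (m'+(j+1))+2 from by omega) (by omega),
      show m'+(j+1)+1 = m'+(j+2) from by omega]
  have hγ : ∀ k, 0 < β (m'+(k+1)) := fun k => hβ _ (by omega)
  -- the three key identities
  have hpid : ∀ j, (recP β (m'+(j+2))).eval 1
      = (recP β (m'+1)).eval 1 * (recPnum β (m'+1) (j+1)).eval 1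
        - β (m'+1) * (recP β m').eval 1 * (recPnum β (m'+2) j).eval 1 :=
    abstract_pid (fun t => β (m'+t)) (fun t => (recP β (m'+t)).eval 1)
      (fun t => (recPnum β (m'+1) t).eval 1) (fun t => (recPnum β (m'+2) t).eval 1)
      hu hq0 hq1 hqrec hr0 hr1 hrrec
  have hstar : ∀ j, (recPstar β lam (m'+1) (m'+(j+2))).eval 1
      = (recP β (m'+(j+2))).eval 1
        + (1-lam) * β (m'+1) * (recP β m').eval 1 * (recPnum β (m'+2) j).eval 1 :=
    abstract_star (fun t => β (m'+t)) lam (fun t => (recP β (m'+t)).eval 1)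
      (fun t => (recPstar β lam (m'+1) (m'+t)).eval 1) (fun t => (recPnum β (m'+2) t).eval 1)
      hu hs1 hs0 hs2 hsrec hr0 hr1 hrrec
  have hW : ∀ j, 0 < (recPnum β (m'+2) (j+1)).eval 1 * (recP β (m'+(j+2))).eval 1
      - (recPnum β (m'+2) j).eval 1 * (recP β (m'+(j+3))).eval 1 :=
    abstract_W (fun t => β (m'+t)) (fun t => (recP β (m'+t)).eval 1)
      (fun t => (recPnum β (m'+2) t).eval 1) hu hr0 hr1 hrrec hγ (hP (m'+1))
  have hc : 0 < β (m'+1) * (recP β m').eval 1 := mul_pos (hβ _ (by omega)) (hP m')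
  have hone : ∀ n, n ≤ m'+1 → qSeq β lam (m'+1) n = 1 := by
    intro n hn
    unfold qSeq
    rw [recPstar_eq_recP β lam hn, div_self (hP n).ne']
  have hform : ∀ j, qSeq β lam (m'+1) (m'+(j+2))
      = 1 + (1-lam) * (β (m'+1) * (recP β m').eval 1)
          * ((recPnum β (m'+2) j).eval 1 / (recP β (m'+(j+2))).eval 1) := by
    intro j
    unfold qSeq
    rw [hstar j, add_div, div_self (hP (m'+(j+2))).ne']
    ring
  have ht : ∀ j, (recPnum β (m'+2) j).eval 1 / (recP β (m'+(j+2))).eval 1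
      < (recPnum β (m'+2) (j+1)).eval 1 / (recP β (m'+(j+1+2))).eval 1 := by
    intro j
    rw [div_lt_div_iff₀ (hP _) (hP _), show m'+(j+1+2) = m'+(j+3) from by omega]
    nlinarith [hW j]
  have ht0 : 0 < (recPnum β (m'+2) 0).eval 1 / (recP β (m'+(0+2))).eval 1 :=
    div_pos (by rw [hr0]; norm_num) (hP _)
  have haeq : ∀ j, qSeq β lam (m'+1) (m'+(j+2))
      = lam + (1-lam) * (aSeq β (m'+1) (m'+(j+2)))⁻¹ := by
    intro j
    unfold qSeq aSeq
    rw [show m'+(j+2) - (m'+1) = j+1 from by omega, hstar j, inv_div]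
    have hqp : (recPnum β (m'+1) (j+1)).eval 1 * (recP β (m'+1)).eval 1
        = (recP β (m'+(j+2))).eval 1
          + β (m'+1) * (recP β m').eval 1 * (recPnum β (m'+2) j).eval 1 := by
      linear_combination - hpid j
    rw [hqp]
    have h1 := (hP (m'+(j+2))).ne'
    field_simp
    ring
  have htendsto : Tendsto (qSeq β lam (m'+1)) atTop (nhds (lam + (1-lam)/L)) := by
    have h1 : Tendsto (fun n => lam + (1-lam) * (aSeq β (m'+1) n)⁻¹) atTop
        (nhds (lam + (1-lam) * L⁻¹)) :=
      tendsto_const_nhds.add ((hL.inv₀ hL0.ne').const_mul _)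
    have h2 : (fun n => lam + (1-lam) * (aSeq β (m'+1) n)⁻¹) =ᶠ[atTop]
        qSeq β lam (m'+1) := by
      filter_upwards [eventually_ge_atTop (m'+2)] with n hn
      obtain ⟨j, rfl⟩ := Nat.exists_eq_add_of_le hn
      rw [show m'+2+j = m'+(j+2) from by omega]
      exact (haeq j).symm
    rw [div_eq_mul_inv]
    exact Tendsto.congr' h2 h1
  have hdec : 1 ≤ lam → ∀ n, qSeq β lam (m'+1) (n+1) ≤ qSeq β lam (m'+1) n := by
    intro hl n
    rcases le_or_gt (n+1) (m'+1) with h | h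
    · rw [hone _ h, hone _ (by omega)]
    rcases eq_or_lt_of_le (show m'+1 ≤ n from by omega) with h2 | h2
    · subst h2
      rw [show m'+1+1 = m'+(0+2) from by omega, hform 0, hone (m'+1) le_rfl]
      nlinarith [mul_pos hc ht0]
    · obtain ⟨j, rfl⟩ := Nat.exists_eq_add_of_le (show m'+2 ≤ n from h2)
      rw [show m'+2+j+1 = m'+(j+1+2) from by omega, show m'+2+j = m'+(j+2) from by omega,
        hform (j+1), hform j]
      nlinarith [mul_pos hc (sub_pos.mpr (ht j))]
  have hinc : lam ≤ 1 → ∀ n, qSeq β lam (m'+1) n ≤ qSeq β lam (m'+1) (n+1) := by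
    intro hl n
    rcases le_or_gt (n+1) (m'+1) with h | h
    · rw [hone _ h, hone _ (by omega)]
    rcases eq_or_lt_of_le (show m'+1 ≤ n from by omega) with h2 | h2
    · subst h2
      rw [show m'+1+1 = m'+(0+2) from by omega, hform 0, hone (m'+1) le_rfl]
      nlinarith [mul_pos hc ht0]
    · obtain ⟨j, rfl⟩ := Nat.exists_eq_add_of_le (show m'+2 ≤ n from h2)
      rw [show m'+2+j+1 = m'+(j+1+2) from by omega, show m'+2+j = m'+(j+2) from by omega,
        hform (j+1), hform j]
      nlinarith [mul_pos hc (sub_pos.mpr (ht j))]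
  have h1L : 0 < 1 - L := by linarith
  constructor
  · intro hlam
    have h2' : lam * (1-L) < 1 := (lt_div_iff₀ h1L).mp hlam
    have heq : lam + (1-lam)/L = (1 - lam*(1-L))/L := by
      field_simp; ring
    refine ⟨htendsto, ?_, hdec, hinc⟩
    rw [heq]
    exact div_pos (by linarith) hL0
  · intro hlam
    subst hlam
    have h0 : 1/(1-L) + (1 - 1/(1-L))/L = 0 := by
      field_simp
      ring
    exact h0 ▸ htendsto
end
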